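/- Let R be a commutative ring, S = R[x], M an R-module, and Q ∈ Spec(S) with Q = ann_S(f) for f = Σ_i m_i x^i ∈ M[x]. Then Q ∩ R = ann_R(m_i) for some coefficient m_i of f. -/

import Mathlib

/-- If a prime `Q` of `R[x]` is the annihilator of an element `f = Σ mᵢ xⁱ` of `M[x]`,
then its contraction `Q ∩ R` is the annihilator of one of the coefficients `mᵢ` of `f`. -/
theorem stmt_3 (R : Type*) [CommRing R] (M : Type*) [AddCommGroup M] [Module R M]
    (Q : Ideal (Polynomial R)) [Q.IsPrime] (f : PolynomialModule R M)
    (hQ : Q = (Submodule.span (Polynomial R) {f}).annihilator) :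
    ∃ i : ℕ, Q.comap (Polynomial.C (R := R)) = (Submodule.span R {f.coeff i}).annihilator := by
  classical
  set P : Ideal R := Q.comap (Polynomial.C (R := R)) with hP
  haveI : P.IsPrime := Ideal.IsPrime.comap _
  -- membership in P
  have hmemP : ∀ r : R, r ∈ P ↔ ∀ i, r • f.coeff i = 0 := by
    intro r
    have : r ∈ P ↔ (Polynomial.C r) • f = 0 := by
      rw [hP, Ideal.mem_comap, hQ, Submodule.mem_annihilator_span_singleton]
    rw [this]
    have hCr : (Polynomial.C r) • f = r • f := by
      have := algebraMap_smul (Polynomial R) r f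
      simpa [Polynomial.algebraMap_eq] using this
    rw [hCr]
    have hcs : ∀ i, (r • f).coeff i = r • f.coeff i := fun i => rfl
    constructor
    · intro h i
      have := congrArg (fun g : PolynomialModule R M => g.coeff i) h
      simpa [hcs] using this
    · intro h
      exact PolynomialModule.ext (Finsupp.ext fun i => by simpa [hcs] using h i)
  -- the intersection of coefficient annihilators over the support is ≤ P
  set I : ℕ → Ideal R := fun i => (Submodule.span R {f.coeff i}).annihilator with hI
  have hPle : ∀ i, P ≤ I i := by
    intro i r hr
    rw [hI, Submodule.mem_annihilator_span_singleton]
    exact (hmemP r).1 hr i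
  have hinf : f.coeff.support.inf I ≤ P := by
    intro r hr
    rw [hmemP]
    intro i
    by_cases hi : i ∈ f.coeff.support
    · have : r ∈ I i := (Finset.inf_le hi : f.coeff.support.inf I ≤ I i) hr
      rwa [hI, Submodule.mem_annihilator_span_singleton] at this
    · have : f.coeff i = 0 := Finsupp.notMem_support_iff.mp hi
      rw [this, smul_zero]
  obtain ⟨i, _, hle⟩ := (Ideal.IsPrime.inf_le' (inferInstance : P.IsPrime)).mp hinf
  exact ⟨i, le_antisymm (hPle i) hle⟩
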